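/- Hermitian case of the Carathéodory correspondence: suppose F(y,z) = ½ h_{jk}(y) conj(z^j) z^k with h Hermitian. Then the Carathéodory field equations 2∂F/∂z̄^j = −i Ā_{jk} z^k + (A_{j,n+2} + iA_{n+1,j}) reduce to the linear system h*_{jk} z^k = A_{j,n+2} + i A_{n+1,j} with h*_{jk} := h_{jk} + i Ā_{jk}; this system has a unique solution z ∈ ℂⁿ if and only if det(h*) ≠ 0, and when it does, the Carathéodory Hamiltonian equals 𝓗(y,A) = ½ K^{jk}(A_{j,n+2} − iA_{n+1,j})(A_{k,n+2} + iA_{n+1,k}) + A_{n+1,n+2}, where K is the inverse matrix of h*. -/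

import Mathlib

open scoped BigOperators Matrix

/-- The index `n+1` (the `(n+1)`-st slot) in `Fin (n+2)`. -/
def idxN1 (n : ℕ) : Fin (n + 2) := ⟨n, by omega⟩

/-- The index `n+2` (the last slot) in `Fin (n+2)`. -/
def idxN2 (n : ℕ) : Fin (n + 2) := ⟨n + 1, by omega⟩

/-- `h*_{jk} := h_{jk} + i Ā_{jk}` where `Ā` is the upper-left `n×n` block of `A`. -/
noncomputable def hstar (n : ℕ) (h : Matrix (Fin n) (Fin n) ℂ)
    (A : Matrix (Fin (n + 2)) (Fin (n + 2)) ℝ) : Matrix (Fin n) (Fin n) ℂ :=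
  Matrix.of fun j k => h j k + Complex.I * (A (Fin.castAdd 2 j) (Fin.castAdd 2 k) : ℂ)

/-- The right-hand side `b_j := A_{j,n+2} + i A_{n+1,j}`. -/
noncomputable def bvec (n : ℕ) (A : Matrix (Fin (n + 2)) (Fin (n + 2)) ℝ) :
    Fin n → ℂ :=
  fun j => (A (Fin.castAdd 2 j) (idxN2 n) : ℂ)
    + Complex.I * (A (idxN1 n) (Fin.castAdd 2 j) : ℂ)

open Complex

noncomputable def Gder (n : ℕ) (h : Matrix (Fin n) (Fin n) ℂ) (z : Fin n → ℂ) :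
    (Fin n → ℂ) →L[ℝ] ℂ :=
  (1 / 2 : ℂ) • ∑ j : Fin n, ∑ k : Fin n,
    (z k • ((h j k) • (Complex.conjCLE.toContinuousLinearMap.comp
        (ContinuousLinearMap.proj (R := ℝ) (φ := fun _ : Fin n => ℂ) j)))
      + (h j k * (starRingEnd ℂ) (z j)) • (ContinuousLinearMap.proj (R := ℝ) (φ := fun _ : Fin n => ℂ) k))

lemma hasFDerivAt_G (n : ℕ) (h : Matrix (Fin n) (Fin n) ℂ) (z : Fin n → ℂ) :
    HasFDerivAt (fun z : Fin n → ℂ => (1 / 2 : ℂ) * ∑ j : Fin n, ∑ k : Fin n,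
        h j k * (starRingEnd ℂ) (z j) * z k) (Gder n h z) z := by
  unfold Gder
  apply HasFDerivAt.const_mul
  apply HasFDerivAt.fun_sum
  intro j _
  apply HasFDerivAt.fun_sum
  intro k _
  have h1 : HasFDerivAt (fun z : Fin n → ℂ => (starRingEnd ℂ) (z j))
      (Complex.conjCLE.toContinuousLinearMap.comp
        (ContinuousLinearMap.proj (R := ℝ) (φ := fun _ : Fin n => ℂ) j)) z :=
    (Complex.conjCLE.toContinuousLinearMap.comp
        (ContinuousLinearMap.proj (R := ℝ) (φ := fun _ : Fin n => ℂ) j)).hasFDerivAt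
  have h2 : HasFDerivAt (fun z : Fin n → ℂ => z k)
      (ContinuousLinearMap.proj (R := ℝ) (φ := fun _ : Fin n => ℂ) k) z :=
    (ContinuousLinearMap.proj (R := ℝ) (φ := fun _ : Fin n => ℂ) k).hasFDerivAt
  rw [add_comm]
  exact (h1.const_mul (h j k)).mul h2

lemma Gder_apply (n : ℕ) (h : Matrix (Fin n) (Fin n) ℂ) (z v : Fin n → ℂ) :
    Gder n h z v = (1 / 2 : ℂ) * ∑ j : Fin n, ∑ k : Fin n,
      (h j k * (starRingEnd ℂ) (v j) * z k + h j k * (starRingEnd ℂ) (z j) * v k) := by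
  simp only [Gder, ContinuousLinearMap.smul_apply, ContinuousLinearMap.sum_apply,
    ContinuousLinearMap.add_apply, ContinuousLinearMap.coe_comp',
    ContinuousLinearMap.proj_apply, Function.comp_apply, smul_eq_mul,
    ContinuousLinearEquiv.coe_coe, Complex.conjCLE_apply]
  congr 1
  refine Finset.sum_congr rfl fun j _ => Finset.sum_congr rfl fun k _ => ?_
  ring

lemma Gder_single (n : ℕ) (h : Matrix (Fin n) (Fin n) ℂ) (z : Fin n → ℂ) (j : Fin n) (c : ℂ) :
    Gder n h z (Pi.single j c) = (1 / 2 : ℂ) *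
      ((starRingEnd ℂ) c * ∑ k : Fin n, h j k * z k
        + c * ∑ p : Fin n, h p j * (starRingEnd ℂ) (z p)) := by
  rw [Gder_apply]
  congr 1
  have split : ∀ (X Y : Fin n → Fin n → ℂ),
      ∑ p : Fin n, ∑ k : Fin n, (X p k + Y p k)
        = (∑ p : Fin n, ∑ k : Fin n, X p k) + (∑ p : Fin n, ∑ k : Fin n, Y p k) := by
    intro X Y
    rw [← Finset.sum_add_distrib]
    exact Finset.sum_congr rfl fun p _ => Finset.sum_add_distrib
  rw [split]
  congr 1
  · rw [Finset.sum_eq_single j (fun p _ hp => by simp [Pi.single_apply, hp]) (by simp)]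
    rw [Finset.mul_sum]
    refine Finset.sum_congr rfl fun k _ => ?_
    simp only [Pi.single_apply, if_pos rfl, if_true]
    ring
  · rw [Finset.mul_sum]
    refine Finset.sum_congr rfl fun p _ => ?_
    rw [Finset.sum_eq_single j (fun k _ hk => by simp [Pi.single_apply, hk]) (by simp)]
    simp only [Pi.single_apply, if_pos rfl, if_true]
    ring

lemma fderiv_F (n : ℕ) (h : Matrix (Fin n) (Fin n) ℂ) (hherm : h.IsHermitian)
    (F : (Fin n → ℂ) → ℝ)
    (hFdef : ∀ z : Fin n → ℂ,
      (F z : ℂ) = (1 / 2 : ℂ) * ∑ j : Fin n, ∑ k : Fin n,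
        h j k * (starRingEnd ℂ) (z j) * z k)
    (z : Fin n → ℂ) (j : Fin n) :
    (fderiv ℝ F z (Pi.single j 1) : ℂ)
        + Complex.I * (fderiv ℝ F z (Pi.single j Complex.I) : ℂ)
      = ∑ k : Fin n, h j k * z k := by
  have hFre : F = fun z => Complex.reCLM ((1 / 2 : ℂ) * ∑ j : Fin n, ∑ k : Fin n,
      h j k * (starRingEnd ℂ) (z j) * z k) := by
    funext w
    rw [← hFdef w]
    simp
  have hF : HasFDerivAt F (Complex.reCLM.comp (Gder n h z)) z := by
    rw [hFre]
    exact Complex.reCLM.hasFDerivAt.comp z (hasFDerivAt_G n h z)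
  rw [hF.fderiv]
  set S := ∑ k : Fin n, h j k * z k with hS
  set T := ∑ p : Fin n, h p j * (starRingEnd ℂ) (z p) with hT
  have hconjS : (starRingEnd ℂ) S = T := by
    rw [hS, map_sum]
    refine Finset.sum_congr rfl fun k _ => ?_
    rw [map_mul, starRingEnd_apply, hherm.apply k j]
  have hconjT : (starRingEnd ℂ) T = S := by
    rw [← hconjS, Complex.conj_conj]
  have e1 : Gder n h z (Pi.single j 1) = (1 / 2 : ℂ) * (S + T) := by
    rw [Gder_single]; simp; rfl
  have e2 : Gder n h z (Pi.single j Complex.I) = (1 / 2 : ℂ) * (Complex.I * T - Complex.I * S) := by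
    rw [Gder_single]; rw [Complex.conj_I]; ring
  have hD1 : ((Complex.reCLM.comp (Gder n h z)) (Pi.single j 1) : ℂ) = (1 / 2 : ℂ) * (S + T) := by
    simp only [ContinuousLinearMap.coe_comp', Function.comp_apply, Complex.reCLM_apply]
    rw [e1]
    refine Complex.conj_eq_iff_re.mp ?_
    rw [map_mul, map_add, hconjS, hconjT, map_div₀, map_one, map_ofNat]
    ring
  have hD2 : ((Complex.reCLM.comp (Gder n h z)) (Pi.single j Complex.I) : ℂ)
      = (1 / 2 : ℂ) * (Complex.I * T - Complex.I * S) := by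
    simp only [ContinuousLinearMap.coe_comp', Function.comp_apply, Complex.reCLM_apply]
    rw [e2]
    refine Complex.conj_eq_iff_re.mp ?_
    rw [map_mul, map_sub, map_mul, map_mul, hconjS, hconjT, Complex.conj_I,
      map_div₀, map_one, map_ofNat]
    ring
  rw [hD1, hD2]
  have : Complex.I * Complex.I = -1 := Complex.I_mul_I
  linear_combination (1 / 2 : ℂ) * (T - S) * this

/-- For `F(y,z) = ½ h_{jk} conj(z^j) z^k` with `h` Hermitian, the
Carathéodory field equations `2∂F/∂z̄^j = −i Ā_{jk} z^k + (A_{j,n+2} + iA_{n+1,j})`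
reduce to the linear system `h* z = b`; this has a unique solution iff `det h* ≠ 0`,
and then the Carathéodory Hamiltonian
`𝓗 = ½(A_{j,n+2} z^j_1 + A_{n+1,j} z^j_2) + A_{n+1,n+2}` equals
`½ K^{jk}(A_{j,n+2} − iA_{n+1,j})(A_{k,n+2} + iA_{n+1,k}) + A_{n+1,n+2}`, `K = (h*)⁻¹`. -/
theorem caratheodory_hermitian_case
    (n : ℕ) (h : Matrix (Fin n) (Fin n) ℂ) (hherm : h.IsHermitian)
    (A : Matrix (Fin (n + 2)) (Fin (n + 2)) ℝ) (hA : Aᵀ = -A)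
    (F : (Fin n → ℂ) → ℝ)
    (hFdef : ∀ z : Fin n → ℂ,
      (F z : ℂ) = (1 / 2 : ℂ) * ∑ j : Fin n, ∑ k : Fin n,
        h j k * (starRingEnd ℂ) (z j) * z k) :
    (∀ z : Fin n → ℂ,
      (∀ j : Fin n,
        (fderiv ℝ F z (Pi.single j 1) : ℂ)
            + Complex.I * (fderiv ℝ F z (Pi.single j Complex.I) : ℂ)
          = - Complex.I * (∑ k : Fin n,
              (A (Fin.castAdd 2 j) (Fin.castAdd 2 k) : ℂ) * z k) + bvec n A j) ↔
      (∀ j : Fin n, ∑ k : Fin n, hstar n h A j k * z k = bvec n A j)) ∧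
    ((∃! z : Fin n → ℂ, ∀ j : Fin n, ∑ k : Fin n, hstar n h A j k * z k = bvec n A j)
      ↔ (hstar n h A).det ≠ 0) ∧
    ((hstar n h A).det ≠ 0 → ∀ z : Fin n → ℂ,
      (∀ j : Fin n, ∑ k : Fin n, hstar n h A j k * z k = bvec n A j) →
      (((1 / 2) * (∑ j : Fin n, (A (Fin.castAdd 2 j) (idxN2 n) * (z j).re
            + A (idxN1 n) (Fin.castAdd 2 j) * (z j).im))
          + A (idxN1 n) (idxN2 n) : ℝ) : ℂ)
        = (1 / 2 : ℂ) * (∑ j : Fin n, ∑ k : Fin n,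
            (hstar n h A)⁻¹ j k * (starRingEnd ℂ) (bvec n A j) * bvec n A k)
          + (A (idxN1 n) (idxN2 n) : ℂ)) := by
  have expand : ∀ (z : Fin n → ℂ) (j : Fin n),
      ∑ k : Fin n, hstar n h A j k * z k
        = (∑ k : Fin n, h j k * z k)
          + Complex.I * ∑ k : Fin n, (A (Fin.castAdd 2 j) (Fin.castAdd 2 k) : ℂ) * z k := by
    intro z j
    rw [Finset.mul_sum, ← Finset.sum_add_distrib]
    refine Finset.sum_congr rfl fun k _ => ?_
    simp only [hstar, Matrix.of_apply]
    ring
  have hsys : ∀ z : Fin n → ℂ,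
      (∀ j : Fin n, ∑ k : Fin n, hstar n h A j k * z k = bvec n A j)
        ↔ (hstar n h A).mulVec z = bvec n A := by
    intro z
    simp [Matrix.mulVec, dotProduct, funext_iff]
  refine ⟨fun z => ?_, ⟨fun hex => ?_, fun hdet => ?_⟩, fun hdet z hz => ?_⟩
  · refine forall_congr' fun j => ?_
    rw [fderiv_F n h hherm F hFdef z j, expand z j]
    constructor <;> intro he <;> linear_combination he
  · obtain ⟨z, hz, huniq⟩ := hex
    by_contra hdet
    obtain ⟨v, hv0, hMv⟩ := Matrix.exists_mulVec_eq_zero_iff.mpr hdet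
    have hz' : (hstar n h A).mulVec z = bvec n A := (hsys z).mp hz
    have h2 : (hstar n h A).mulVec (z + v) = bvec n A := by
      rw [Matrix.mulVec_add, hMv, add_zero, hz']
    have h3 := huniq (z + v) ((hsys _).mpr h2)
    exact hv0 (by simpa using h3)
  · have hu : IsUnit (hstar n h A).det := isUnit_iff_ne_zero.mpr hdet
    refine ⟨(hstar n h A)⁻¹.mulVec (bvec n A), (hsys _).mpr ?_, fun y hy => ?_⟩
    · rw [Matrix.mulVec_mulVec, Matrix.mul_nonsing_inv _ hu, Matrix.one_mulVec]
    · have hy' := (hsys y).mp hy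
      rw [← hy', Matrix.mulVec_mulVec, Matrix.nonsing_inv_mul _ hu, Matrix.one_mulVec]
  · have hu : IsUnit (hstar n h A).det := isUnit_iff_ne_zero.mpr hdet
    have hz' : (hstar n h A).mulVec z = bvec n A := (hsys z).mp hz
    have hinv : (hstar n h A)⁻¹.mulVec (bvec n A) = z := by
      rw [← hz', Matrix.mulVec_mulVec, Matrix.nonsing_inv_mul _ hu, Matrix.one_mulVec]
    set Q := ∑ j : Fin n, (starRingEnd ℂ) (bvec n A j) * z j with hQ
    have hdouble : ∑ j : Fin n, ∑ k : Fin n,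
        (hstar n h A)⁻¹ j k * (starRingEnd ℂ) (bvec n A j) * bvec n A k = Q := by
      refine Finset.sum_congr rfl fun j _ => ?_
      have hj : ∑ k : Fin n, (hstar n h A)⁻¹ j k * bvec n A k = z j := by
        have := congrFun hinv j
        simpa [Matrix.mulVec, dotProduct] using this
      rw [← hj, Finset.mul_sum]
      refine Finset.sum_congr rfl fun k _ => ?_
      ring
    have hMconj : ∀ j k : Fin n,
        (starRingEnd ℂ) (hstar n h A j k) = hstar n h A k j := by
      intro j k
      have hA' : A (Fin.castAdd 2 k) (Fin.castAdd 2 j)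
          = - A (Fin.castAdd 2 j) (Fin.castAdd 2 k) := by
        have := congrFun (congrFun hA (Fin.castAdd 2 j)) (Fin.castAdd 2 k)
        simpa [Matrix.transpose_apply] using this
      simp only [hstar, Matrix.of_apply, map_add, map_mul, Complex.conj_I,
        Complex.conj_ofReal]
      rw [starRingEnd_apply, hherm.apply k j, hA']
      push_cast
      ring
    have hQreal : (starRingEnd ℂ) Q = Q := by
      have hb : ∀ j : Fin n, bvec n A j = ∑ k : Fin n, hstar n h A j k * z k :=
        fun j => (hz j).symm
      have e1 : (starRingEnd ℂ) Q = ∑ j : Fin n, ∑ k : Fin n,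
          hstar n h A j k * z k * (starRingEnd ℂ) (z j) := by
        rw [hQ, map_sum]
        refine Finset.sum_congr rfl fun j _ => ?_
        rw [map_mul, Complex.conj_conj, hb j, Finset.sum_mul]
      have e2 : Q = ∑ j : Fin n, ∑ k : Fin n,
          hstar n h A k j * (starRingEnd ℂ) (z k) * z j := by
        rw [hQ]
        refine Finset.sum_congr rfl fun j _ => ?_
        rw [hb j, map_sum, Finset.sum_mul]
        refine Finset.sum_congr rfl fun k _ => ?_
        rw [map_mul, hMconj j k]
      rw [e1, e2, Finset.sum_comm]
      refine Finset.sum_congr rfl fun j _ => Finset.sum_congr rfl fun k _ => ?_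
      ring
    have hQre : ((Q.re : ℝ) : ℂ) = Q := Complex.conj_eq_iff_re.mp hQreal
    have hQre2 : Q.re = ∑ j : Fin n, (A (Fin.castAdd 2 j) (idxN2 n) * (z j).re
        + A (idxN1 n) (Fin.castAdd 2 j) * (z j).im) := by
      rw [hQ, Complex.re_sum]
      refine Finset.sum_congr rfl fun j _ => ?_
      simp [Complex.mul_re, bvec]
    rw [hdouble, ← hQre, hQre2]
    push_cast
    ring
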